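/- Let X be a locally compact Hausdorff space and S a finite set of homeomorphisms of X, each of whose fixed-point sets has empty interior. Then every non-empty open subset U of X contains a non-empty open subset V such that α(V) ∩ V = ∅ for all α ∈ S. -/

import Mathlib

lemma stmt3_single {X : Type*} [TopologicalSpace X] [T2Space X]
    (α : X ≃ₜ X) (hfix : interior {x : X | α x = x} = ∅)
    (U : Set X) (hU : IsOpen U) (hne : U.Nonempty) :
    ∃ V : Set X, IsOpen V ∧ V.Nonempty ∧ V ⊆ U ∧ (⇑α '' V) ∩ V = ∅ := by
  obtain ⟨x, hxU, hx⟩ : ∃ x ∈ U, α x ≠ x := by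
    by_contra h
    push_neg at h
    have : U ⊆ interior {x : X | α x = x} := by
      intro y hy
      exact interior_maximal (fun z hz => h z hz) hU hy
    rw [hfix] at this
    exact (this hne.choose_spec).elim
  obtain ⟨W1, W2, hW1, hW2, hxW1, hxW2, hdisj⟩ := t2_separation hx
  refine ⟨U ∩ W2 ∩ α ⁻¹' W1, ?_, ⟨x, ⟨hxU, hxW2⟩, hxW1⟩, fun y hy => hy.1.1, ?_⟩
  · exact ((hU.inter hW2).inter (hW1.preimage α.continuous))
  · apply Set.eq_empty_of_forall_notMem
    rintro y ⟨⟨z, hz, rfl⟩, hy⟩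
    exact hdisj.le_bot ⟨hz.2, hy.1.2⟩

theorem stmt3 {X : Type*} [TopologicalSpace X] [LocallyCompactSpace X] [T2Space X]
    (S : Set (X ≃ₜ X)) (hS : S.Finite)
    (hfix : ∀ α ∈ S, interior {x : X | α x = x} = ∅) :
    ∀ U : Set X, IsOpen U → U.Nonempty →
      ∃ V : Set X, IsOpen V ∧ V.Nonempty ∧ V ⊆ U ∧ ∀ α ∈ S, (⇑α '' V) ∩ V = ∅ := by
  revert hfix
  refine Set.Finite.induction_on _ hS
    (motive := fun (T : Set (X ≃ₜ X)) _ => (∀ α ∈ T, interior {x : X | α x = x} = ∅) → ∀ U : Set X, IsOpen U →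
      U.Nonempty → ∃ V : Set X, IsOpen V ∧ V.Nonempty ∧ V ⊆ U ∧
        ∀ α ∈ T, (⇑α '' V) ∩ V = ∅)
    (fun _ U hU hne => ⟨U, hU, hne, subset_rfl, fun α hα => hα.elim⟩) ?_
  intro α S hαS hSfin ih hfix U hU hne
  obtain ⟨W, hW, hWne, hWU, hWα⟩ :=
    stmt3_single α (hfix α (Set.mem_insert _ _)) U hU hne
  obtain ⟨V, hV, hVne, hVW, hVS⟩ :=
    ih (fun β hβ => hfix β (Set.mem_insert_of_mem _ hβ)) W hW hWne
  refine ⟨V, hV, hVne, hVW.trans hWU, fun β hβ => ?_⟩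
  rcases hβ with rfl | hβ
  · apply Set.eq_empty_of_forall_notMem
    intro y hy
    have : y ∈ (⇑β '' W) ∩ W := ⟨Set.image_mono hVW hy.1, hVW hy.2⟩
    rw [hWα] at this; exact this
  · exact hVS β hβ
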